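/- Let R : ℝ^m × ℝ^n → ℝ^p with constant c and S : ℝ^m × ℝ^n → ℝ^q with constant c' be two smooth Euclidean FCREs such that every pair (x, y) with R(x, y) = c also satisfies S(x, y) = c' (i.e. S = c' is a subproblem of the refinement R = c). Suppose R(x₀, y₀) = c, and let H_R and H_S denote the least-squares solution maps of R and S at (x₀, y₀), respectively. Then the operator norms of their derivatives satisfy ‖DH_S(x₀)‖ ≤ ‖DH_R(x₀)‖; that is, the least-squares condition number of the subproblem is at most that of the refinement. -/

import Mathlib

/-- The rank of a continuous linear map between real normed spaces. -/
noncomputable def clmRank {E F : Type*} [NormedAddCommGroup E] [NormedSpace ℝ E]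
    [NormedAddCommGroup F] [NormedSpace ℝ F] (f : E →L[ℝ] F) : ℕ :=
  Module.finrank ℝ (LinearMap.range (f : E →ₗ[ℝ] F))


open Filter Topology in
private lemma norm_fderiv_le_of_norm_le' {E F : Type*} [NormedAddCommGroup E] [NormedSpace ℝ E]
    [NormedAddCommGroup F] [NormedSpace ℝ F] {f g : E → F} {x₀ : E} {y₀ : F}
    (hf : DifferentiableAt ℝ f x₀) (hg : DifferentiableAt ℝ g x₀)
    (hf0 : f x₀ = y₀) (hg0 : g x₀ = y₀)
    (h : ∀ᶠ x in 𝓝 x₀, ‖f x - y₀‖ ≤ ‖g x - y₀‖) :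
    ‖fderiv ℝ f x₀‖ ≤ ‖fderiv ℝ g x₀‖ := by
  apply ContinuousLinearMap.opNorm_le_bound _ (norm_nonneg _)
  intro v
  have key : ‖fderiv ℝ f x₀ v‖ ≤ ‖fderiv ℝ g x₀ v‖ := by
    set γ : ℝ → E := fun t => x₀ + t • v with hγdef
    have hγ0 : γ 0 = x₀ := by simp [hγdef]
    have hγ : HasDerivAt γ v 0 := by
      have : HasDerivAt (fun t : ℝ => t • v) ((1:ℝ) • v) 0 :=
        (hasDerivAt_id (0:ℝ)).smul_const v
      simpa [hγdef] using this.const_add x₀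
    have hγcont : ContinuousAt γ 0 := hγ.continuousAt
    have hF : HasDerivAt (f ∘ γ) (fderiv ℝ f x₀ v) 0 := by
      refine HasFDerivAt.comp_hasDerivAt 0 ?_ hγ
      rw [hγ0]; exact hf.hasFDerivAt
    have hG : HasDerivAt (g ∘ γ) (fderiv ℝ g x₀ v) 0 := by
      refine HasFDerivAt.comp_hasDerivAt 0 ?_ hγ
      rw [hγ0]; exact hg.hasFDerivAt
    have hFs := hasDerivAt_iff_tendsto_slope.mp hF
    have hGs := hasDerivAt_iff_tendsto_slope.mp hG
    have hFn : Tendsto (fun t => ‖slope (f ∘ γ) 0 t‖) (𝓝[≠] 0) (𝓝 ‖fderiv ℝ f x₀ v‖) :=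
      hFs.norm
    have hGn : Tendsto (fun t => ‖slope (g ∘ γ) 0 t‖) (𝓝[≠] 0) (𝓝 ‖fderiv ℝ g x₀ v‖) :=
      hGs.norm
    refine le_of_tendsto_of_tendsto hFn hGn ?_
    have hev : ∀ᶠ t in 𝓝 (0:ℝ), ‖f (γ t) - y₀‖ ≤ ‖g (γ t) - y₀‖ := by
      have : Tendsto γ (𝓝 0) (𝓝 x₀) := by rw [← hγ0]; exact hγcont
      exact this.eventually h
    filter_upwards [nhdsWithin_le_nhds hev] with t ht
    simp only [slope_def_module, sub_zero, norm_smul, Function.comp, hγ0, hf0, hg0]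
    exact mul_le_mul_of_nonneg_left ht (norm_nonneg _)
  exact key.trans ((fderiv ℝ g x₀).le_opNorm v)

/-- If `S = c'` is a subproblem of the refinement `R = c`, then the
least-squares condition number of the subproblem bounds that of the refinement from below. -/
theorem stmt3 {m n p q : ℕ}
    (R : EuclideanSpace ℝ (Fin m) × EuclideanSpace ℝ (Fin n) → EuclideanSpace ℝ (Fin p))
    (S : EuclideanSpace ℝ (Fin m) × EuclideanSpace ℝ (Fin n) → EuclideanSpace ℝ (Fin q))
    (c : EuclideanSpace ℝ (Fin p)) (c' : EuclideanSpace ℝ (Fin q)) (rR rS : ℕ)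
    -- `R = c` is a Euclidean FCRE:
    (hR : ContDiff ℝ ((⊤ : ℕ∞) : WithTop ℕ∞) R)
    (hRfeas : ∀ x, ∃ y, R (x, y) = c)
    (hRranky : ∀ x y, clmRank (fderiv ℝ (fun y' => R (x, y')) y) = rR)
    (hRrank : ∀ x y, clmRank (fderiv ℝ R (x, y)) = rR)
    -- `S = c'` is a Euclidean FCRE:
    (hS : ContDiff ℝ ((⊤ : ℕ∞) : WithTop ℕ∞) S)
    (hSfeas : ∀ x, ∃ y, S (x, y) = c')
    (hSranky : ∀ x y, clmRank (fderiv ℝ (fun y' => S (x, y')) y) = rS)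
    (hSrank : ∀ x y, clmRank (fderiv ℝ S (x, y)) = rS)
    -- `S = c'` is a subproblem of the refinement `R = c`:
    (hsub : ∀ x y, R (x, y) = c → S (x, y) = c')
    (x₀ : EuclideanSpace ℝ (Fin m)) (y₀ : EuclideanSpace ℝ (Fin n))
    (hsol : R (x₀, y₀) = c)
    -- `HR` is the least-squares solution map of `R` at `(x₀, y₀)`:
    (XhR : Set (EuclideanSpace ℝ (Fin m))) (YhR : Set (EuclideanSpace ℝ (Fin n)))
    (HR : EuclideanSpace ℝ (Fin m) → EuclideanSpace ℝ (Fin n))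
    (hXhR : IsOpen XhR) (hx₀R : x₀ ∈ XhR) (hYhR : IsOpen YhR) (hy₀R : y₀ ∈ YhR)
    (hHR : ContDiffOn ℝ ((⊤ : ℕ∞) : WithTop ℕ∞) HR XhR) (hHRx₀ : HR x₀ = y₀)
    (hLSR : ∀ x ∈ XhR, HR x ∈ YhR ∧ R (x, HR x) = c ∧
      ∀ y ∈ YhR, R (x, y) = c → ‖HR x - y₀‖ ≤ ‖y - y₀‖)
    -- `HS` is the least-squares solution map of `S` at `(x₀, y₀)`:
    (XhS : Set (EuclideanSpace ℝ (Fin m))) (YhS : Set (EuclideanSpace ℝ (Fin n)))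
    (HS : EuclideanSpace ℝ (Fin m) → EuclideanSpace ℝ (Fin n))
    (hXhS : IsOpen XhS) (hx₀S : x₀ ∈ XhS) (hYhS : IsOpen YhS) (hy₀S : y₀ ∈ YhS)
    (hHS : ContDiffOn ℝ ((⊤ : ℕ∞) : WithTop ℕ∞) HS XhS) (hHSx₀ : HS x₀ = y₀)
    (hLSS : ∀ x ∈ XhS, HS x ∈ YhS ∧ S (x, HS x) = c' ∧
      ∀ y ∈ YhS, S (x, y) = c' → ‖HS x - y₀‖ ≤ ‖y - y₀‖) :
    ‖fderiv ℝ HS x₀‖ ≤ ‖fderiv ℝ HR x₀‖ := by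
  have hHRd : DifferentiableAt ℝ HR x₀ :=
    (hHR.contDiffAt (hXhR.mem_nhds hx₀R)).differentiableAt (by simp)
  have hHSd : DifferentiableAt ℝ HS x₀ :=
    (hHS.contDiffAt (hXhS.mem_nhds hx₀S)).differentiableAt (by simp)
  refine norm_fderiv_le_of_norm_le' hHSd hHRd hHSx₀ hHRx₀ ?_
  have h3 : ∀ᶠ x in nhds x₀, HR x ∈ YhS := by
    refine hHRd.continuousAt.eventually_mem (hYhS.mem_nhds ?_)
    rw [hHRx₀]; exact hy₀S
  filter_upwards [hXhR.mem_nhds hx₀R, hXhS.mem_nhds hx₀S, h3] with x hxR hxS hRY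
  exact (hLSS x hxS).2.2 (HR x) hRY (hsub x (HR x) (hLSR x hxR).2.1)
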